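/- arXiv:1204.5452 — 3 statements merged into one kernel-verified Lean document; each statement's English description precedes it below -/
import Mathlib

section
/- For natural numbers q > 1, Q ≥ 1, real α, integer z and natural p ≥ 1, the sum S_Q(α, z) = Σ_{n < q^Q} exp(2πi(αn + (z/p)·S(n))) factors as the product over r from 0 to Q−1 of Σ_{u=0}^{q−1} exp(2πiu(αq^r + z/p)), where S(n) is the base-q digit sum of n. -/
open Complex Finset

/-- `S q n` is the sum of the digits of `n` in base `q`. -/
def digitSum (q n : ℕ) : ℕ := (Nat.digits q n).sum

lemma digitSum_add_mul (q d m : ℕ) (hq : 1 < q) (hd : d < q) :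
    digitSum q (d + q * m) = d + digitSum q m := by
  rcases Nat.eq_zero_or_pos (d + q * m) with h | h
  · have hd0 : d = 0 := by omega
    have hm0 : m = 0 := by
      rcases Nat.eq_zero_or_pos m with h' | h'
      · exact h'
      · exfalso; nlinarith
    simp [hd0, hm0, digitSum]
  · have := Nat.digits_def' hq h
    have hmod : (d + q * m) % q = d := by
      rw [Nat.add_mul_mod_self_left]; exact Nat.mod_eq_of_lt hd
    have hdiv : (d + q * m) / q = m := by
      rw [Nat.add_mul_div_left _ _ (by omega : 0 < q), Nat.div_eq_of_lt hd]; omega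
    rw [digitSum, this, hmod, hdiv, List.sum_cons]
    rfl

lemma aux_factorization (q : ℕ) (hq : 1 < q) (c : ℂ) :
    ∀ (Q : ℕ) (α : ℝ),
    ∑ n ∈ Finset.range (q ^ Q),
        Complex.exp (2 * Real.pi * Complex.I *
          ((α : ℂ) * n + c * (digitSum q n : ℂ))) =
      ∏ r ∈ Finset.range Q, ∑ u ∈ Finset.range q,
        Complex.exp (2 * Real.pi * Complex.I *
          ((u : ℂ) * ((α : ℂ) * (q : ℂ) ^ r + c))) := by
  intro Q
  induction Q with
  | zero => intro α; simp [digitSum]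
  | succ Q ih =>
    intro α
    have hsplit : ∑ n ∈ Finset.range (q ^ (Q + 1)),
        Complex.exp (2 * Real.pi * Complex.I *
          ((α : ℂ) * n + c * (digitSum q n : ℂ))) =
        ∑ x ∈ Finset.range q ×ˢ Finset.range (q ^ Q),
          Complex.exp (2 * Real.pi * Complex.I *
            ((α : ℂ) * (x.1 + q * x.2 : ℕ) + c * (digitSum q (x.1 + q * x.2) : ℂ))) := by
      apply Finset.sum_nbij' (fun n => (n % q, n / q)) (fun x => x.1 + q * x.2)
      · intro n hn
        simp only [Finset.mem_range, Finset.mem_product] at *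
        constructor
        · exact Nat.mod_lt _ (by omega)
        · rw [pow_succ] at hn
          exact Nat.div_lt_of_lt_mul (by rw [mul_comm] at hn; omega)
      · intro x hx
        simp only [Finset.mem_range, Finset.mem_product] at *
        rw [pow_succ, mul_comm (q^Q) q]
        calc x.1 + q * x.2 < q * (x.2 + 1) := by rw [Nat.mul_add, Nat.mul_one]; omega
          _ ≤ q * q ^ Q := Nat.mul_le_mul_left q (by omega)
      · intro n _; simp [Nat.mod_add_div]
      · intro x hx
        simp only [Finset.mem_range, Finset.mem_product] at hx
        have h1 : (x.1 + q * x.2) % q = x.1 := by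
          rw [Nat.add_mul_mod_self_left, Nat.mod_eq_of_lt hx.1]
        have h2 : (x.1 + q * x.2) / q = x.2 := by
          rw [Nat.add_mul_div_left _ _ (by omega : 0 < q), Nat.div_eq_of_lt hx.1]; omega
        simp [h1, h2]
      · intro n _; simp only [Nat.mod_add_div]
    rw [hsplit, Finset.sum_product]
    have key : ∀ x ∈ Finset.range q ×ˢ Finset.range (q ^ Q), True := fun _ _ => trivial
    have hterm : ∀ d ∈ Finset.range q, ∀ m ∈ Finset.range (q ^ Q),
        Complex.exp (2 * Real.pi * Complex.I *
            ((α : ℂ) * (d + q * m : ℕ) + c * (digitSum q (d + q * m) : ℂ))) =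
        Complex.exp (2 * Real.pi * Complex.I * ((d : ℂ) * ((α : ℂ) * (q:ℂ)^0 + c))) *
        Complex.exp (2 * Real.pi * Complex.I *
            (((α * q : ℝ) : ℂ) * m + c * (digitSum q m : ℂ))) := by
      intro d hd m hm
      rw [digitSum_add_mul q d m hq (Finset.mem_range.mp hd), ← Complex.exp_add]
      congr 1
      push_cast
      ring
    calc ∑ d ∈ Finset.range q, ∑ m ∈ Finset.range (q ^ Q),
          Complex.exp (2 * Real.pi * Complex.I *
            ((α : ℂ) * (d + q * m : ℕ) + c * (digitSum q (d + q * m) : ℂ)))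
        = ∑ d ∈ Finset.range q, ∑ m ∈ Finset.range (q ^ Q),
            Complex.exp (2 * Real.pi * Complex.I * ((d : ℂ) * ((α : ℂ) * (q:ℂ)^0 + c))) *
            Complex.exp (2 * Real.pi * Complex.I *
              (((α * q : ℝ) : ℂ) * m + c * (digitSum q m : ℂ))) := by
          apply Finset.sum_congr rfl
          intro d hd
          exact Finset.sum_congr rfl (fun m hm => hterm d hd m hm)
      _ = (∑ d ∈ Finset.range q,
            Complex.exp (2 * Real.pi * Complex.I * ((d : ℂ) * ((α : ℂ) * (q:ℂ)^0 + c)))) *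
          (∑ m ∈ Finset.range (q ^ Q),
            Complex.exp (2 * Real.pi * Complex.I *
              (((α * q : ℝ) : ℂ) * m + c * (digitSum q m : ℂ)))) := by
          rw [← Finset.sum_mul_sum]
      _ = (∑ d ∈ Finset.range q,
            Complex.exp (2 * Real.pi * Complex.I * ((d : ℂ) * ((α : ℂ) * (q:ℂ)^0 + c)))) *
          ∏ r ∈ Finset.range Q, ∑ u ∈ Finset.range q,
            Complex.exp (2 * Real.pi * Complex.I *
              ((u : ℂ) * (((α * q : ℝ) : ℂ) * (q : ℂ) ^ r + c))) := by rw [ih]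
      _ = ∏ r ∈ Finset.range (Q + 1), ∑ u ∈ Finset.range q,
            Complex.exp (2 * Real.pi * Complex.I *
              ((u : ℂ) * ((α : ℂ) * (q : ℂ) ^ r + c))) := by
          rw [Finset.prod_range_succ']
          rw [mul_comm]
          congr 1
          apply Finset.prod_congr rfl
          intro r _
          apply Finset.sum_congr rfl
          intro u _
          congr 2
          push_cast
          ring

theorem sum_factorization (q p Q : ℕ) (hq : 1 < q) (hp : 1 ≤ p) (hQ : 1 ≤ Q)
    (α : ℝ) (z : ℤ) :
    ∑ n ∈ Finset.range (q ^ Q),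
        Complex.exp (2 * Real.pi * Complex.I *
          ((α : ℂ) * n + (z : ℂ) / (p : ℂ) * (digitSum q n : ℂ))) =
      ∏ r ∈ Finset.range Q, ∑ u ∈ Finset.range q,
        Complex.exp (2 * Real.pi * Complex.I *
          ((u : ℂ) * ((α : ℂ) * (q : ℂ) ^ r + (z : ℂ) / (p : ℂ)))) :=
  aux_factorization q hq ((z : ℂ) / (p : ℂ)) Q α
end

section
/- For any positive integer q ≥ 2 and any real x, the averaged sum (1/q) Σ_{j=0}^{q−1} min(q, 1/(2‖(x+j)/q + z/p‖)) is at most 6(1 + ln q), where z is an integer and p a positive integer. -/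
open Finset

/-- Distance from a real number to the nearest integer. -/
noncomputable def distNearestInt (x : ℝ) : ℝ := |x - round x|

lemma distNearestInt_add_int (x : ℝ) (n : ℤ) : distNearestInt (x + n) = distNearestInt x := by
  unfold distNearestInt
  rw [round_add_intCast]
  push_cast
  ring_nf

lemma distNearestInt_eq_min {y : ℝ} (h0 : 0 ≤ y) (h1 : y ≤ 1) :
    distNearestInt y = min y (1 - y) := by
  unfold distNearestInt
  rcases lt_or_ge y (1/2) with h | h
  · have hr : round y = 0 := by
      rw [round_eq]
      apply Int.floor_eq_iff.mpr
      constructor <;> push_cast <;> linarith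
    rw [hr]
    push_cast
    rw [sub_zero, abs_of_nonneg h0, min_eq_left (by linarith)]
  · have hr : round y = 1 := by
      rw [round_eq]
      apply Int.floor_eq_iff.mpr
      constructor <;> push_cast <;> linarith
    rw [hr]
    push_cast
    rw [abs_of_nonpos (by linarith), min_eq_right (by linarith)]
    ring

lemma harmonic_real (n : ℕ) : ∑ i ∈ range n, 1/((i:ℝ)+1) = (harmonic n : ℝ) := by
  rw [harmonic]
  push_cast
  exact Finset.sum_congr rfl (fun i _ => by rw [one_div])

theorem averaged_min_sum_bound (q : ℕ) (hq : 2 ≤ q) (z : ℤ) (p : ℕ) (hp : 0 < p) (x : ℝ) :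
    (1 / (q : ℝ)) * ∑ j ∈ Finset.range q,
        (if distNearestInt ((x + j) / q + (z : ℝ) / p) = 0 then (q : ℝ)
         else min (q : ℝ) (1 / (2 * distNearestInt ((x + j) / q + (z : ℝ) / p)))) ≤
      6 * (1 + Real.log q) := by
  have hq0 : (0:ℝ) < q := by positivity
  have hqz : (q:ℤ) ≠ 0 := by positivity
  have hqZ : (0:ℤ) < (q:ℤ) := by positivity
  set c : ℝ := x / q + (z:ℝ)/p with hc
  set N : ℤ := ⌊(q:ℝ) * c⌋ with hN
  set θ : ℝ := Int.fract ((q:ℝ) * c) with hθ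
  have hθ0 : 0 ≤ θ := Int.fract_nonneg _
  have hθ1 : θ < 1 := Int.fract_lt_one _
  have hNθ : (q:ℝ) * c = N + θ := by
    rw [hθ, hN]; exact (Int.floor_add_fract _).symm
  have hc2 : c = ((N:ℝ) + θ)/q := by
    rw [← hNθ, mul_div_cancel_left₀ _ hq0.ne']
  set G : ℕ → ℝ := fun m =>
    if distNearestInt (((m:ℝ) + θ)/q) = 0 then (q:ℝ)
    else min (q:ℝ) (1/(2 * distNearestInt (((m:ℝ) + θ)/q))) with hG
  have hdist : ∀ j : ℕ, distNearestInt ((x + j)/q + (z:ℝ)/p)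
      = distNearestInt (((((N + j) % q).toNat : ℝ) + θ)/q) := by
    intro j
    set k : ℤ := (N + j) / q with hk
    set r : ℤ := (N + j) % q with hrdef
    have hkr : (N + (j:ℤ)) = q * k + r := (Int.mul_ediv_add_emod _ _).symm
    have hrnn : (0:ℤ) ≤ r := Int.emod_nonneg _ hqz
    have hrr : ((r.toNat : ℝ)) = (r : ℝ) := by
      exact_mod_cast Int.toNat_of_nonneg hrnn
    have harg : (x + j)/q + (z:ℝ)/p = ((r.toNat : ℝ) + θ)/q + ((k:ℤ):ℝ) := by
      have h1 : (x + j)/q + (z:ℝ)/p = c + (j:ℝ)/q := by rw [hc]; ring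
      have hNr : (N:ℝ) = (q:ℝ) * (k:ℝ) + (r:ℝ) - (j:ℝ) := by
        have h2 : ((N:ℝ) + (j:ℝ)) = (q:ℝ) * (k:ℝ) + (r:ℝ) := by exact_mod_cast hkr
        linarith
      rw [h1, hc2, hrr, hNr]
      field_simp
      ring
    rw [harg, distNearestInt_add_int]
  have hsum : ∑ j ∈ Finset.range q,
      (if distNearestInt ((x + j) / q + (z : ℝ) / p) = 0 then (q : ℝ)
        else min (q : ℝ) (1 / (2 * distNearestInt ((x + j) / q + (z : ℝ) / p))))
      = ∑ m ∈ range q, G m := by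
    refine Finset.sum_nbij' (fun j => ((N + j) % q).toNat)
      (fun m => (((m:ℤ) - N) % q).toNat) ?_ ?_ ?_ ?_ ?_
    · intro a ha
      have h1 : (N + a) % q < q := Int.emod_lt_of_pos _ hqZ
      have h2 : 0 ≤ (N + a) % q := Int.emod_nonneg _ hqz
      rw [← Int.toNat_lt h2] at h1
      exact mem_range.mpr (by exact_mod_cast h1)
    · intro a ha
      have h1 : ((a:ℤ) - N) % q < q := Int.emod_lt_of_pos _ hqZ
      have h2 : 0 ≤ ((a:ℤ) - N) % q := Int.emod_nonneg _ hqz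
      rw [← Int.toNat_lt h2] at h1
      exact mem_range.mpr (by exact_mod_cast h1)
    · intro a ha
      rw [mem_range] at ha
      have h2 : 0 ≤ (N + a) % q := Int.emod_nonneg _ hqz
      rw [Int.toNat_of_nonneg h2]
      have h1 : ((N + a) % q - N) % q = (N + a - N) % q := by
        rw [sub_eq_add_neg, Int.emod_add_emod, ← sub_eq_add_neg]
      rw [h1, add_sub_cancel_left,
        Int.emod_eq_of_lt (by positivity) (by exact_mod_cast ha)]
      simp
    · intro a ha
      rw [mem_range] at ha
      rw [Int.toNat_of_nonneg (Int.emod_nonneg _ hqz)]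
      rw [Int.add_comm, Int.emod_add_emod, sub_add_cancel,
        Int.emod_eq_of_lt (by positivity) (by exact_mod_cast ha)]
      simp
    · intro a _
      rw [hdist a]
  rw [hsum]
  clear hsum hdist hc2 hNθ hc
  -- Now bound the sum over m of G m
  obtain ⟨n, rfl⟩ : ∃ n, q = n + 2 := ⟨q - 2, by omega⟩
  have hQval : ((n+2:ℕ):ℝ) = (n:ℝ)+2 := by push_cast; ring
  have hGle : ∀ m : ℕ, G m ≤ ((n+2:ℕ):ℝ) := by
    intro m
    rw [hG]
    dsimp only
    split
    · exact le_rfl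
    · exact min_le_left _ _
  have hmid : ∀ i ∈ range n,
      G (i+1) ≤ ((n+2:ℕ):ℝ)/2 * (1/((i:ℝ)+1) + 1/((n:ℝ)-i)) := by
    intro i hi
    rw [mem_range] at hi
    have hin : (i:ℝ) + 1 ≤ (n:ℝ) := by exact_mod_cast hi
    set u : ℝ := (((i+1:ℕ):ℝ) + θ)/((n+2:ℕ):ℝ) with hu
    have hm : ((i+1:ℕ):ℝ) = (i:ℝ)+1 := by push_cast; ring
    have hu0 : 0 ≤ u := by rw [hu]; positivity
    have hu1 : u ≤ 1 := by
      rw [hu, div_le_one hq0, hQval, hm]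
      linarith
    have hd := distNearestInt_eq_min hu0 hu1
    have ha : ((i:ℝ)+1)/((n:ℝ)+2) ≤ u := by
      rw [hu, hQval, hm]
      exact (div_le_div_iff_of_pos_right (by positivity)).mpr (by linarith)
    have hb : ((n:ℝ)-i)/((n:ℝ)+2) ≤ 1 - u := by
      rw [hu, hQval, hm]
      have h5 : 1 - ((i:ℝ)+1+θ)/((n:ℝ)+2) = ((n:ℝ)+1-i-θ)/((n:ℝ)+2) := by
        field_simp
        ring
      rw [h5]
      exact (div_le_div_iff_of_pos_right (by positivity)).mpr (by linarith)
    have hapos : 0 < ((i:ℝ)+1)/((n:ℝ)+2) := by positivity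
    have hbpos : 0 < ((n:ℝ)-i)/((n:ℝ)+2) := by
      apply div_pos <;> linarith
    have hmin : min (((i:ℝ)+1)/((n:ℝ)+2)) (((n:ℝ)-i)/((n:ℝ)+2)) ≤ distNearestInt u := by
      rw [hd]
      exact min_le_min ha hb
    have hminpos : 0 < min (((i:ℝ)+1)/((n:ℝ)+2)) (((n:ℝ)-i)/((n:ℝ)+2)) := lt_min hapos hbpos
    have hdpos : 0 < distNearestInt u := lt_of_lt_of_le hminpos hmin
    rw [hG]
    dsimp only
    rw [← hu, if_neg (ne_of_gt hdpos)]
    have h1 : (i:ℝ)+1 ≠ 0 := by positivity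
    have h2 : (n:ℝ)-i ≠ 0 := by intro h; rw [sub_eq_zero] at h; linarith
    have h3 : (n:ℝ)+2 ≠ 0 := by positivity
    calc min (((n+2:ℕ):ℝ)) (1/(2*distNearestInt u)) ≤ 1/(2*distNearestInt u) :=
          min_le_right _ _
      _ ≤ 1/(2*min (((i:ℝ)+1)/((n:ℝ)+2)) (((n:ℝ)-i)/((n:ℝ)+2))) :=
          one_div_le_one_div_of_le (by linarith) (by linarith)
      _ ≤ 1/(2*(((i:ℝ)+1)/((n:ℝ)+2))) + 1/(2*(((n:ℝ)-i)/((n:ℝ)+2))) := by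
          rcases le_total (((i:ℝ)+1)/((n:ℝ)+2)) (((n:ℝ)-i)/((n:ℝ)+2)) with h | h
          · rw [min_eq_left h]
            have : 0 ≤ 1/(2*(((n:ℝ)-i)/((n:ℝ)+2))) := by positivity
            linarith
          · rw [min_eq_right h]
            have : 0 ≤ 1/(2*(((i:ℝ)+1)/((n:ℝ)+2))) := by positivity
            linarith
      _ = ((n+2:ℕ):ℝ)/2 * (1/((i:ℝ)+1) + 1/((n:ℝ)-i)) := by
          rw [hQval]
          field_simp
  have hreflect : ∑ i ∈ range n, 1/((n:ℝ)-i) = ∑ i ∈ range n, 1/((i:ℝ)+1) := by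
    rw [← Finset.sum_range_reflect (fun i => 1/((i:ℝ)+1)) n]
    apply Finset.sum_congr rfl
    intro j hj
    rw [mem_range] at hj
    have hcast : ((n - 1 - j : ℕ):ℝ) = (n:ℝ) - 1 - j := by
      have h1 : 1 + j ≤ n := by omega
      rw [Nat.sub_sub, Nat.cast_sub h1]
      push_cast
      ring
    rw [hcast]
    ring_nf
  have hpeel : ∑ m ∈ range (n+2), G m = (∑ i ∈ range n, G (i+1)) + (G 0 + G (n+1)) := by
    rw [Finset.sum_range_succ, Finset.sum_range_succ']
    ring
  have hsum2 : ∑ i ∈ range n, ((n+2:ℕ):ℝ)/2 * (1/((i:ℝ)+1) + 1/((n:ℝ)-i))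
      = ((n+2:ℕ):ℝ) * (harmonic n : ℝ) := by
    rw [← Finset.mul_sum, Finset.sum_add_distrib, hreflect, harmonic_real]
    ring
  have hlogn : Real.log n ≤ Real.log ((n+2:ℕ):ℝ) := by
    rcases Nat.eq_zero_or_pos n with h | h
    · subst h
      simp only [Nat.cast_zero, Real.log_zero]
      apply Real.log_nonneg
      rw [hQval]
      norm_num
    · exact Real.log_le_log (by exact_mod_cast h) (by rw [hQval]; push_cast; linarith)
  have hL0 : 0 ≤ Real.log ((n+2:ℕ):ℝ) := by
    apply Real.log_nonneg
    rw [hQval]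
    linarith [Nat.cast_nonneg (α := ℝ) n]
  have hH : (harmonic n : ℝ) ≤ 1 + Real.log ((n+2:ℕ):ℝ) :=
    le_trans (harmonic_le_one_add_log n) (by linarith)
  have hS : ∑ m ∈ range (n+2), G m ≤ ((n+2:ℕ):ℝ) * (3 + Real.log ((n+2:ℕ):ℝ)) := by
    rw [hpeel]
    have h1 : ∑ i ∈ range n, G (i+1) ≤ ((n+2:ℕ):ℝ) * (harmonic n : ℝ) := by
      rw [← hsum2]
      exact Finset.sum_le_sum hmid
    have h2 := hGle 0
    have h3 := hGle (n+1)
    nlinarith [mul_le_mul_of_nonneg_left hH (le_of_lt hq0)]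
  calc (1/((n+2:ℕ):ℝ)) * ∑ m ∈ range (n+2), G m
      ≤ (1/((n+2:ℕ):ℝ)) * (((n+2:ℕ):ℝ) * (3 + Real.log ((n+2:ℕ):ℝ))) := by
        apply mul_le_mul_of_nonneg_left hS (by positivity)
    _ = 3 + Real.log ((n+2:ℕ):ℝ) := by
        field_simp
    _ ≤ 6 * (1 + Real.log ((n+2:ℕ):ℝ)) := by linarith
end

section
/- For every x ≥ 1 and every complex-valued function f with |f(n)| ≤ 1 for all n, |Σ_{n ≤ x} τ(n) f(n)| ≤ 2 Σ_{l < √x} |Σ_{l² < ln ≤ x} f(ln)| + √x, where the inner sum runs over natural numbers n with l² < ln ≤ x and τ is the divisor function. -/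
open Finset Complex
open scoped Classical

theorem tau_weighted_sum_bound (x : ℝ) (hx : 1 ≤ x) (f : ℕ → ℂ)
    (hf : ∀ n, ‖f n‖ ≤ 1) :
    ‖∑ n ∈ Finset.Icc 1 ⌊x⌋₊, (n.divisors.card : ℂ) * f n‖ ≤
      2 * ∑ l ∈ (Finset.Icc 1 ⌊x⌋₊).filter (fun l : ℕ => (l : ℝ) < Real.sqrt x),
            ‖∑ n ∈ (Finset.Icc 1 ⌊x⌋₊).filter
                (fun n : ℕ => (l : ℝ) ^ 2 < (l * n : ℕ) ∧ ((l * n : ℕ) : ℝ) ≤ x),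
              f (l * n)‖ +
        Real.sqrt x := by
  set N := ⌊x⌋₊ with hNdef
  have hx0 : (0:ℝ) ≤ x := by linarith
  have hN1 : 1 ≤ N := Nat.le_floor (by exact_mod_cast hx)
  have hxN : (N : ℝ) ≤ x := Nat.floor_le hx0
  set P : Finset (ℕ × ℕ) :=
    ((Finset.Icc 1 N) ×ˢ (Finset.Icc 1 N)).filter (fun p => p.1 * p.2 ≤ N) with hPdef
  have hPmem : ∀ p : ℕ × ℕ, p ∈ P ↔ 1 ≤ p.1 ∧ 1 ≤ p.2 ∧ p.1 * p.2 ≤ N := by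
    intro p
    simp only [hPdef, Finset.mem_filter, Finset.mem_product, Finset.mem_Icc]
    constructor
    · rintro ⟨⟨⟨h1, _⟩, ⟨h2, _⟩⟩, h3⟩; exact ⟨h1, h2, h3⟩
    · rintro ⟨h1, h2, h3⟩
      refine ⟨⟨⟨h1, ?_⟩, ⟨h2, ?_⟩⟩, h3⟩
      · calc p.1 ≤ p.1 * p.2 := Nat.le_mul_of_pos_right _ h2
          _ ≤ N := h3
      · calc p.2 ≤ p.1 * p.2 := Nat.le_mul_of_pos_left _ h1
          _ ≤ N := h3
  -- Step 1: rewrite the sum as a sum over pairs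
  have step1 : ∑ n ∈ Finset.Icc 1 N, (n.divisors.card : ℂ) * f n
      = ∑ p ∈ P, f (p.1 * p.2) := by
    have fib : ∀ n ∈ Finset.Icc 1 N,
        P.filter (fun p => p.1 * p.2 = n) = n.divisorsAntidiagonal := by
      intro n hn
      rw [Finset.mem_Icc] at hn
      ext p
      rw [Finset.mem_filter, hPmem, Nat.mem_divisorsAntidiagonal]
      constructor
      · rintro ⟨⟨_, _, _⟩, h⟩; exact ⟨h, by omega⟩
      · rintro ⟨h, hn0⟩
        have h1 : 1 ≤ p.1 := by
          rcases Nat.eq_zero_or_pos p.1 with h0 | h0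
          · exfalso; rw [h0] at h; simp at h; omega
          · exact h0
        have h2 : 1 ≤ p.2 := by
          rcases Nat.eq_zero_or_pos p.2 with h0 | h0
          · exfalso; rw [h0] at h; simp at h; omega
          · exact h0
        exact ⟨⟨h1, h2, by omega⟩, h⟩
    rw [← Finset.sum_fiberwise_of_maps_to (g := fun p : ℕ × ℕ => p.1 * p.2)
      (t := Finset.Icc 1 N) (fun p hp => by
        rw [hPmem] at hp
        rw [Finset.mem_Icc]
        exact ⟨Nat.one_le_iff_ne_zero.mpr (Nat.mul_ne_zero (by omega) (by omega)), hp.2.2⟩)]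
    refine Finset.sum_congr rfl fun n hn => ?_
    rw [fib n hn]
    have hcongr : ∀ p ∈ n.divisorsAntidiagonal, f (p.1 * p.2) = f n := fun p hp => by
      rw [(Nat.mem_divisorsAntidiagonal.mp hp).1]
    have hcard : n.divisorsAntidiagonal.card = n.divisors.card := by
      rw [← Nat.map_div_right_divisors, Finset.card_map]
    rw [Finset.sum_congr rfl hcongr, Finset.sum_const, hcard, nsmul_eq_mul]
  -- split into three pieces
  set Plt : Finset (ℕ × ℕ) := P.filter (fun p => p.1 < p.2) with hPlt
  set Pgt : Finset (ℕ × ℕ) := P.filter (fun p => p.2 < p.1) with hPgt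
  set Pd : Finset (ℕ × ℕ) := P.filter (fun p => p.1 = p.2) with hPd
  have split : ∑ p ∈ P, f (p.1 * p.2)
      = ∑ p ∈ Plt, f (p.1 * p.2) + (∑ p ∈ Pgt, f (p.1 * p.2)
        + ∑ p ∈ Pd, f (p.1 * p.2)) := by
    rw [← Finset.sum_filter_add_sum_filter_not P (fun p => p.1 < p.2)]
    congr 1
    rw [← Finset.sum_filter_add_sum_filter_not (P.filter (fun p => ¬ p.1 < p.2))
      (fun p => p.2 < p.1)]
    congr 1
    · congr 1
      rw [Finset.filter_filter]
      apply Finset.filter_congr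
      intro p _
      omega
    · congr 1
      rw [Finset.filter_filter]
      apply Finset.filter_congr
      intro p _
      omega
  -- swap symmetry
  have swap : ∑ p ∈ Pgt, f (p.1 * p.2) = ∑ p ∈ Plt, f (p.1 * p.2) := by
    apply Finset.sum_nbij' (i := Prod.swap) (j := Prod.swap)
    · intro p hp
      simp only [hPgt, hPlt, Finset.mem_filter, hPmem] at hp ⊢
      obtain ⟨⟨h1, h2, h3⟩, h4⟩ := hp
      exact ⟨⟨h2, h1, by rwa [mul_comm] at h3⟩, h4⟩
    · intro p hp
      simp only [hPgt, hPlt, Finset.mem_filter, hPmem] at hp ⊢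
      obtain ⟨⟨h1, h2, h3⟩, h4⟩ := hp
      exact ⟨⟨h2, h1, by rwa [mul_comm] at h3⟩, h4⟩
    · intro p _; simp
    · intro p _; simp
    · intro p _
      simp [mul_comm]
  -- Plt sum equals the double sum in the statement
  set L : Finset ℕ :=
    (Finset.Icc 1 N).filter (fun l : ℕ => (l : ℝ) < Real.sqrt x) with hL
  set T : ℕ → Finset ℕ := fun l =>
    (Finset.Icc 1 N).filter
      (fun n : ℕ => (l : ℝ) ^ 2 < (l * n : ℕ) ∧ ((l * n : ℕ) : ℝ) ≤ x) with hT
  have hTmem : ∀ l, 1 ≤ l → ∀ n : ℕ, n ∈ T l ↔ l < n ∧ l * n ≤ N := by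
    intro l hl n
    simp only [hT, Finset.mem_filter, Finset.mem_Icc]
    constructor
    · rintro ⟨⟨hn1, hn2⟩, h1, h2⟩
      have hln : l * n ≤ N := Nat.le_floor h2
      have : l * l < l * n := by
        have h1' := h1
        push_cast at h1'
        have : ((l : ℝ)) * l < (l : ℝ) * n := by nlinarith
        exact_mod_cast this
      have hlt : l < n := lt_of_mul_lt_mul_left this (Nat.zero_le l)
      exact ⟨hlt, hln⟩
    · rintro ⟨hlt, hle⟩
      have hn1 : 1 ≤ n := by omega
      have hn2 : n ≤ N := le_trans (Nat.le_mul_of_pos_left _ hl) hle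
      have hle' : ((l * n : ℕ) : ℝ) ≤ x := le_trans (by exact_mod_cast hle) hxN
      refine ⟨⟨hn1, hn2⟩, ?_, hle'⟩
      have : l * l < l * n := mul_lt_mul_of_pos_left hlt (by omega)
      calc (l : ℝ) ^ 2 = ((l * l : ℕ) : ℝ) := by push_cast; ring
        _ < ((l * n : ℕ) : ℝ) := by exact_mod_cast this
  have stepA : ∑ p ∈ Plt, f (p.1 * p.2) = ∑ l ∈ L, ∑ n ∈ T l, f (l * n) := by
    rw [← Finset.sum_fiberwise_of_maps_to (g := fun p : ℕ × ℕ => p.1) (t := L)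
      (fun p hp => by
        simp only [hPlt, Finset.mem_filter, hPmem] at hp
        obtain ⟨⟨h1, h2, h3⟩, h4⟩ := hp
        simp only [hL, Finset.mem_filter, Finset.mem_Icc]
        refine ⟨⟨h1, le_trans (Nat.le_mul_of_pos_right _ h2) h3⟩, ?_⟩
        -- p.1 < sqrt x since p.1^2 < p.1*p.2 ≤ N ≤ x
        have hsq : (p.1 : ℝ) ^ 2 < x := by
          have h5 : p.1 * p.1 < p.1 * p.2 := mul_lt_mul_of_pos_left h4 (by omega)
          have h6 : ((p.1 * p.1 : ℕ) : ℝ) < x := by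
            calc ((p.1 * p.1 : ℕ) : ℝ) < ((p.1 * p.2 : ℕ) : ℝ) := by exact_mod_cast h5
              _ ≤ (N : ℝ) := by exact_mod_cast h3
              _ ≤ x := hxN
          calc (p.1 : ℝ) ^ 2 = ((p.1 * p.1 : ℕ) : ℝ) := by push_cast; ring
            _ < x := h6
        exact Real.lt_sqrt_of_sq_lt hsq)]
    refine Finset.sum_congr rfl fun l hl => ?_
    have hl1 : 1 ≤ l := by
      simp only [hL, Finset.mem_filter, Finset.mem_Icc] at hl; exact hl.1.1
    apply Finset.sum_nbij' (i := fun p => p.2) (j := fun n => (l, n))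
    · intro p hp
      simp only [Finset.mem_filter, hPlt, hPmem] at hp
      obtain ⟨⟨⟨h1, h2, h3⟩, h4⟩, h5⟩ := hp
      rw [hTmem l hl1]
      subst h5
      exact ⟨h4, h3⟩
    · intro n hn
      rw [hTmem l hl1] at hn
      obtain ⟨hlt, hle⟩ := hn
      simp only [Finset.mem_filter, hPlt, hPmem]
      exact ⟨⟨⟨hl1, by omega, hle⟩, hlt⟩, trivial⟩
    · intro p hp
      simp only [Finset.mem_filter] at hp
      rw [← hp.2]
    · intro n _; rfl
    · intro p hp
      simp only [Finset.mem_filter] at hp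
      rw [hp.2]
  -- diagonal bound
  have stepD : ‖∑ p ∈ Pd, f (p.1 * p.2)‖ ≤ Real.sqrt x := by
    calc ‖∑ p ∈ Pd, f (p.1 * p.2)‖ ≤ ∑ p ∈ Pd, ‖f (p.1 * p.2)‖ :=
          norm_sum_le _ _
      _ ≤ ∑ p ∈ Pd, 1 := Finset.sum_le_sum (fun p _ => hf _)
      _ = (Pd.card : ℝ) := by simp
      _ ≤ ((Finset.Icc 1 ⌊Real.sqrt x⌋₊).card : ℝ) := by
          have : Pd.card ≤ (Finset.Icc 1 ⌊Real.sqrt x⌋₊).card := by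
            apply Finset.card_le_card_of_injOn (fun p => p.1)
            · intro p hp
              simp only [hPd, Finset.mem_coe, Finset.mem_filter, hPmem] at hp
              obtain ⟨⟨h1, h2, h3⟩, h4⟩ := hp
              rw [Finset.mem_coe, Finset.mem_Icc]
              refine ⟨h1, Nat.le_floor ?_⟩
              have hsq : (p.1 : ℝ) ^ 2 ≤ x := by
                have : ((p.1 * p.1 : ℕ) : ℝ) ≤ x := by
                  calc ((p.1 * p.1 : ℕ) : ℝ) ≤ (N : ℝ) := by
                        exact_mod_cast (h4 ▸ h3 : p.1 * p.1 ≤ N)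
                    _ ≤ x := hxN
                calc (p.1 : ℝ) ^ 2 = ((p.1 * p.1 : ℕ) : ℝ) := by push_cast; ring
                  _ ≤ x := this
              exact Real.le_sqrt_of_sq_le hsq
            · intro p hp q hq hpq
              simp only [hPd, Finset.mem_coe, Finset.mem_filter] at hp hq
              obtain ⟨p1, p2⟩ := p
              obtain ⟨q1, q2⟩ := q
              simp only [Prod.mk.injEq]
              simp only at hpq
              exact ⟨hpq, by omega⟩
          exact_mod_cast this
      _ = (⌊Real.sqrt x⌋₊ : ℝ) := by
          rw [Nat.card_Icc]; simp
      _ ≤ Real.sqrt x := Nat.floor_le (Real.sqrt_nonneg x)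
  -- final assembly
  rw [step1, split, swap, stepA, ← add_assoc]
  have hnorm : ‖(2 : ℂ) * ∑ l ∈ L, ∑ n ∈ T l, f (l * n)
      + ∑ p ∈ Pd, f (p.1 * p.2)‖
      ≤ 2 * ∑ l ∈ L, ‖∑ n ∈ T l, f (l * n)‖ + Real.sqrt x := by
    calc ‖(2 : ℂ) * ∑ l ∈ L, ∑ n ∈ T l, f (l * n) + ∑ p ∈ Pd, f (p.1 * p.2)‖
        ≤ ‖(2 : ℂ) * ∑ l ∈ L, ∑ n ∈ T l, f (l * n)‖ + ‖∑ p ∈ Pd, f (p.1 * p.2)‖ :=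
          norm_add_le _ _
      _ ≤ 2 * ‖∑ l ∈ L, ∑ n ∈ T l, f (l * n)‖ + Real.sqrt x := by
          rw [norm_mul]
          gcongr
          · simp
      _ ≤ 2 * ∑ l ∈ L, ‖∑ n ∈ T l, f (l * n)‖ + Real.sqrt x := by
          gcongr
          exact norm_sum_le _ _
  calc ‖∑ l ∈ L, ∑ n ∈ T l, f (l * n) + ∑ l ∈ L, ∑ n ∈ T l, f (l * n)
        + ∑ p ∈ Pd, f (p.1 * p.2)‖
      = ‖(2 : ℂ) * ∑ l ∈ L, ∑ n ∈ T l, f (l * n) + ∑ p ∈ Pd, f (p.1 * p.2)‖ := by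
        congr 1
        ring
    _ ≤ 2 * ∑ l ∈ L, ‖∑ n ∈ T l, f (l * n)‖ + Real.sqrt x := hnorm
end
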